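/- Let L = L* ∈ ℝ^{ν×ν}⟨x,x*⟩ be a symmetric matrix polynomial, and let X be a g-tuple of real n×n matrices with L(X) ⪰ 0. Then for every vector v ∈ ℝ^{ℓn}, the left module I({(X,v)}) = {p ∈ ℝ^{1×ℓ}⟨x,x*⟩ : p(X)v = 0} is L-real. If moreover L(X) ≻ 0, then I({(X,v)}) is strongly L-real for every v. -/

import Mathlib

open scoped BigOperators
open Matrix

/-- The `2g` free letters: `Sum.inl i` is `xᵢ`, `Sum.inr i` is `xᵢ*`. -/
abbrev Lttr (g : ℕ) := Fin g ⊕ Fin g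

/-- The free real algebra `ℝ⟨x,x*⟩` on `2g` letters. -/
abbrev FreePoly (g : ℕ) := FreeAlgebra ℝ (Lttr g)

noncomputable def xvar {g : ℕ} (i : Fin g) : FreePoly g := FreeAlgebra.ι ℝ (Sum.inl i)

noncomputable def xstar {g : ℕ} (i : Fin g) : FreePoly g := FreeAlgebra.ι ℝ (Sum.inr i)

/-- The involution `*` on `ℝ⟨x,x*⟩`: linear, reverses products, swaps `xᵢ` and `xᵢ*`. -/
noncomputable def pstar {g : ℕ} (p : FreePoly g) : FreePoly g :=
  MulOpposite.unop
    (FreeAlgebra.lift ℝ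
      (fun l : Lttr g => MulOpposite.op (FreeAlgebra.ι ℝ (Sum.swap l))) p)

/-- Evaluation of a noncommutative polynomial at a `g`-tuple of real `n × n` matrices,
sending `xᵢ` to `X i` and `xᵢ*` to `(X i)ᵀ`. -/
noncomputable def evalP {g n : ℕ} (X : Fin g → Matrix (Fin n) (Fin n) ℝ) :
    FreePoly g →ₐ[ℝ] Matrix (Fin n) (Fin n) ℝ :=
  FreeAlgebra.lift ℝ (Sum.elim X (fun i => (X i)ᵀ))

/-- Entrywise (block) evaluation of a `ν × ℓ` matrix polynomial. -/
noncomputable def evalM {g n ν ℓ : ℕ} (X : Fin g → Matrix (Fin n) (Fin n) ℝ)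
    (p : Matrix (Fin ν) (Fin ℓ) (FreePoly g)) :
    Matrix (Fin ν × Fin n) (Fin ℓ × Fin n) ℝ :=
  fun ir js => evalP X (p ir.1 js.1) ir.2 js.2

/-- Evaluation of a row vector of polynomials (an element of `ℝ^{1×ℓ}⟨x,x*⟩`). -/
noncomputable def evalRow {g n ℓ : ℕ} (X : Fin g → Matrix (Fin n) (Fin n) ℝ)
    (p : Fin ℓ → FreePoly g) : Matrix (Fin n) (Fin ℓ × Fin n) ℝ :=
  fun r js => evalP X (p js.1) r js.2

/-- The involution on matrices of polynomials: entrywise `*` combined with transpose. -/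
noncomputable def starM {g a b : ℕ} (p : Matrix (Fin a) (Fin b) (FreePoly g)) :
    Matrix (Fin b) (Fin a) (FreePoly g) :=
  fun i j => pstar (p j i)

/-- For a row vector `p ∈ ℝ^{1×ℓ}⟨x,x*⟩`, the `ℓ × ℓ` matrix `p*p`. -/
noncomputable def sqForm {g ℓ : ℕ} (p : Fin ℓ → FreePoly g) :
    Matrix (Fin ℓ) (Fin ℓ) (FreePoly g) :=
  fun a b => pstar (p a) * p b

/-- For `q ∈ ℝ^{ν×ℓ}⟨x,x*⟩`, the `ℓ × ℓ` matrix `q*Lq`. -/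
noncomputable def quadForm {g ν ℓ : ℕ} (L : Matrix (Fin ν) (Fin ν) (FreePoly g))
    (q : Matrix (Fin ν) (Fin ℓ) (FreePoly g)) : Matrix (Fin ℓ) (Fin ℓ) (FreePoly g) :=
  starM q * L * q

/-- For row vectors `r, ι ∈ ℝ^{1×ℓ}⟨x,x*⟩`, the `ℓ × ℓ` matrix `r*ι`. -/
noncomputable def outerStar {g ℓ : ℕ} (r ι : Fin ℓ → FreePoly g) :
    Matrix (Fin ℓ) (Fin ℓ) (FreePoly g) :=
  fun a b => pstar (r a) * ι b

/-- `m ∈ ℝ^{a×1}I`: every row of the matrix polynomial `m` lies in the left module `I`. -/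
def rowsInM {g a ℓ : ℕ} (I : Submodule (FreePoly g) (Fin ℓ → FreePoly g))
    (m : Matrix (Fin a) (Fin ℓ) (FreePoly g)) : Prop :=
  ∀ i, m i ∈ I

/-- Every row of the matrix polynomial `m` lies in the real subspace `C`. -/
def rowsInR {g a ℓ : ℕ} (C : Submodule ℝ (Fin ℓ → FreePoly g))
    (m : Matrix (Fin a) (Fin ℓ) (FreePoly g)) : Prop :=
  ∀ i, m i ∈ C

/-- The set `ℝ^{ℓ×1}I + I*ℝ^{1×ℓ}` of `ℓ × ℓ` matrix polynomials. -/
def modPlusStar {g ℓ : ℕ} (I : Submodule (FreePoly g) (Fin ℓ → FreePoly g)) :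
    Set (Matrix (Fin ℓ) (Fin ℓ) (FreePoly g)) :=
  { m | ∃ u v : Matrix (Fin ℓ) (Fin ℓ) (FreePoly g),
      rowsInM I u ∧ rowsInM I v ∧ m = u + starM v }

/-- `I` is an `L`-real left module. -/
def IsLReal {g ν ℓ : ℕ} (L : Matrix (Fin ν) (Fin ν) (FreePoly g))
    (I : Submodule (FreePoly g) (Fin ℓ → FreePoly g)) : Prop :=
  ∀ (a b : ℕ) (p : Fin a → (Fin ℓ → FreePoly g))
    (q : Fin b → Matrix (Fin ν) (Fin ℓ) (FreePoly g)),
    ((∑ i, sqForm (p i)) + ∑ j, quadForm L (q j)) ∈ modPlusStar I →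
    (∀ i, p i ∈ I) ∧ ∀ j, rowsInM I (L * q j)

/-- `I` is a strongly `L`-real left module. -/
def IsLRealStrong {g ν ℓ : ℕ} (L : Matrix (Fin ν) (Fin ν) (FreePoly g))
    (I : Submodule (FreePoly g) (Fin ℓ → FreePoly g)) : Prop :=
  ∀ (a b : ℕ) (p : Fin a → (Fin ℓ → FreePoly g))
    (q : Fin b → Matrix (Fin ν) (Fin ℓ) (FreePoly g)),
    ((∑ i, sqForm (p i)) + ∑ j, quadForm L (q j)) ∈ modPlusStar I →
    (∀ i, p i ∈ I) ∧ ∀ j, rowsInM I (q j)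

/-- `I` is a real left module. -/
def IsRealMod {g ℓ : ℕ} (I : Submodule (FreePoly g) (Fin ℓ → FreePoly g)) : Prop :=
  ∀ (a : ℕ) (p : Fin a → (Fin ℓ → FreePoly g)),
    (∑ i, sqForm (p i)) ∈ modPlusStar I → ∀ i, p i ∈ I

/-- The `L`-real radical of `I`: the smallest `L`-real left module containing `I`. -/
noncomputable def Lrad {g ν ℓ : ℕ} (L : Matrix (Fin ν) (Fin ν) (FreePoly g))
    (I : Submodule (FreePoly g) (Fin ℓ → FreePoly g)) :
    Submodule (FreePoly g) (Fin ℓ → FreePoly g) :=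
  sInf { J | I ≤ J ∧ IsLReal L J }

/-- The strong `L`-real radical of `I`. -/
noncomputable def LradStrong {g ν ℓ : ℕ} (L : Matrix (Fin ν) (Fin ν) (FreePoly g))
    (I : Submodule (FreePoly g) (Fin ℓ → FreePoly g)) :
    Submodule (FreePoly g) (Fin ℓ → FreePoly g) :=
  sInf { J | I ≤ J ∧ IsLRealStrong L J }

/-- The real radical of `I`: the smallest real left module containing `I`. -/
noncomputable def realRad {g ℓ : ℕ} (I : Submodule (FreePoly g) (Fin ℓ → FreePoly g)) :
    Submodule (FreePoly g) (Fin ℓ → FreePoly g) :=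
  sInf { J | I ≤ J ∧ IsRealMod J }

/-- The word `w` as a product of letters in `ℝ⟨x,x*⟩`. -/
noncomputable def fword {g : ℕ} (w : List (Lttr g)) : FreePoly g :=
  (w.map (FreeAlgebra.ι ℝ)).prod

/-- The subspace of polynomials of degree at most `d`. -/
noncomputable def degLE (g d : ℕ) : Submodule ℝ (FreePoly g) :=
  Submodule.span ℝ { p | ∃ w : List (Lttr g), w.length ≤ d ∧ p = fword w }

/-- The monomial `eᵢ ⊗ w` in `ℝ^{1×ℓ}⟨x,x*⟩`. -/
noncomputable def monoRow {g ℓ : ℕ} (i : Fin ℓ) (w : List (Lttr g)) : Fin ℓ → FreePoly g :=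
  fun j => if j = i then fword w else 0

/-- `C` is a right chip space: it is spanned by a set of monomials and is closed
under taking middle chips. -/
def IsChipSpace {g ℓ : ℕ} (C : Submodule ℝ (Fin ℓ → FreePoly g)) : Prop :=
  (∃ S : Set (Fin ℓ × List (Lttr g)),
      C = Submodule.span ℝ ((fun m => monoRow m.1 m.2) '' S)) ∧
  ∀ (i : Fin ℓ) (w1 w2 w3 : List (Lttr g)),
    monoRow i (w1 ++ w2 ++ w3) ∈ C → monoRow i w3 ∈ C → monoRow i (w2 ++ w3) ∈ C

/-- `C` is full: it contains every right chip of each of its monomials. -/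
def IsFullChip {g ℓ : ℕ} (C : Submodule ℝ (Fin ℓ → FreePoly g)) : Prop :=
  ∀ (i : Fin ℓ) (w1 w2 : List (Lttr g)), monoRow i (w1 ++ w2) ∈ C → monoRow i w2 ∈ C

/-- The subspace `ℝ⟨x,x*⟩_d C`: the span of all products `q • c` with `deg q ≤ d`, `c ∈ C`. -/
noncomputable def degC {g ℓ : ℕ} (d : ℕ) (C : Submodule ℝ (Fin ℓ → FreePoly g)) :
    Submodule ℝ (Fin ℓ → FreePoly g) :=
  Submodule.span ℝ { v | ∃ q ∈ degLE g d, ∃ c ∈ C, v = fun j => q * c j }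

/-- The subspace `C*ℝ⟨x,x*⟩₁C` of `ℓ × ℓ` matrix polynomials. -/
noncomputable def sandC {g ℓ : ℕ} (C : Submodule ℝ (Fin ℓ → FreePoly g)) :
    Submodule ℝ (Matrix (Fin ℓ) (Fin ℓ) (FreePoly g)) :=
  Submodule.span ℝ
    { m | ∃ a ∈ C, ∃ b ∈ C, ∃ q ∈ degLE g 1,
        m = fun u v => pstar (a u) * q * b v }

/-- `I` is an `(L,C)`-real left module. -/
def IsLCReal {g ν ℓ : ℕ} (L : Matrix (Fin ν) (Fin ν) (FreePoly g))
    (C : Submodule ℝ (Fin ℓ → FreePoly g))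
    (I : Submodule (FreePoly g) (Fin ℓ → FreePoly g)) : Prop :=
  ∀ (a b : ℕ) (p : Fin a → (Fin ℓ → FreePoly g))
    (q : Fin b → Matrix (Fin ν) (Fin ℓ) (FreePoly g)),
    (∀ i, p i ∈ C) → (∀ j, rowsInR C (q j)) →
    ((∑ i, sqForm (p i)) + ∑ j, quadForm L (q j)) ∈ modPlusStar I →
    (∀ i, p i ∈ I) ∧ ∀ j, rowsInM I (L * q j)

/-- `I` is a strongly `(L,C)`-real left module. -/
def IsLCRealStrong {g ν ℓ : ℕ} (L : Matrix (Fin ν) (Fin ν) (FreePoly g))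
    (C : Submodule ℝ (Fin ℓ → FreePoly g))
    (I : Submodule (FreePoly g) (Fin ℓ → FreePoly g)) : Prop :=
  ∀ (a b : ℕ) (p : Fin a → (Fin ℓ → FreePoly g))
    (q : Fin b → Matrix (Fin ν) (Fin ℓ) (FreePoly g)),
    (∀ i, p i ∈ C) → (∀ j, rowsInR C (q j)) →
    ((∑ i, sqForm (p i)) + ∑ j, quadForm L (q j)) ∈ modPlusStar I →
    (∀ i, p i ∈ I) ∧ ∀ j, rowsInM I (q j)

/-- The `(L,C)`-real radical of `I`. -/
noncomputable def LCrad {g ν ℓ : ℕ} (L : Matrix (Fin ν) (Fin ν) (FreePoly g))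
    (C : Submodule ℝ (Fin ℓ → FreePoly g))
    (I : Submodule (FreePoly g) (Fin ℓ → FreePoly g)) :
    Submodule (FreePoly g) (Fin ℓ → FreePoly g) :=
  sInf { J | I ≤ J ∧ IsLCReal L C J }

/-- The strong `(L,C)`-real radical of `I`. -/
noncomputable def LCradStrong {g ν ℓ : ℕ} (L : Matrix (Fin ν) (Fin ν) (FreePoly g))
    (C : Submodule ℝ (Fin ℓ → FreePoly g))
    (I : Submodule (FreePoly g) (Fin ℓ → FreePoly g)) :
    Submodule (FreePoly g) (Fin ℓ → FreePoly g) :=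
  sInf { J | I ≤ J ∧ IsLCRealStrong L C J }

/-- The constant term of a noncommutative polynomial. -/
noncomputable def constTerm (g : ℕ) : FreePoly g →ₐ[ℝ] ℝ :=
  FreeAlgebra.lift ℝ (fun _ : Lttr g => (0 : ℝ))

/-- `L` is a linear pencil: symmetric, with entries of degree at most `1`. -/
def IsPencil {g ν : ℕ} (L : Matrix (Fin ν) (Fin ν) (FreePoly g)) : Prop :=
  starM L = L ∧ ∀ i j, L i j ∈ degLE g 1

/-- `L` is monic: its constant term is the identity matrix. -/
def IsMonic {g ν : ℕ} (L : Matrix (Fin ν) (Fin ν) (FreePoly g)) : Prop :=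
  ∀ i j, constTerm g (L i j) = if i = j then 1 else 0

/-- A real matrix viewed as a constant matrix polynomial. -/
noncomputable def constM {g a b : ℕ} (A : Matrix (Fin a) (Fin b) ℝ) :
    Matrix (Fin a) (Fin b) (FreePoly g) :=
  A.map (algebraMap ℝ (FreePoly g))

/-- `(X, v) ∈ V(I)`: every element of `I` kills `v` at `X`. -/
def inV {g ℓ n : ℕ} (I : Submodule (FreePoly g) (Fin ℓ → FreePoly g))
    (X : Fin g → Matrix (Fin n) (Fin n) ℝ) (v : Fin ℓ × Fin n → ℝ) : Prop :=
  ∀ p ∈ I, (evalRow X p).mulVec v = 0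


section Helpers

variable {g n : ℕ} (X : Fin g → Matrix (Fin n) (Fin n) ℝ)

lemma evalP_pstar (p : FreePoly g) :
    evalP X (pstar p) = (evalP X p)ᵀ := by
  have h : (AlgHom.op (evalP X)).comp
        (FreeAlgebra.lift ℝ (fun l : Lttr g => MulOpposite.op (FreeAlgebra.ι ℝ (Sum.swap l)))) =
      (Matrix.transposeAlgEquiv (Fin n) ℝ ℝ).toAlgHom.comp (evalP X) := by
    apply FreeAlgebra.hom_ext
    funext l
    cases l with
    | inl i => simp [evalP, Sum.swap]
    | inr i => simp [evalP, Sum.swap]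
  have h2 := DFunLike.congr_fun h p
  simp only [AlgHom.coe_comp, Function.comp_apply, AlgEquiv.toAlgHom_eq_coe,
    AlgHom.coe_coe, Matrix.transposeAlgEquiv_apply] at h2
  have h3 := congrArg MulOpposite.unop h2
  simpa [pstar] using h3

lemma evalM_mul {a b c : ℕ} (A : Matrix (Fin a) (Fin b) (FreePoly g))
    (B : Matrix (Fin b) (Fin c) (FreePoly g)) :
    evalM X (A * B) = evalM X A * evalM X B := by
  ext ⟨i, r⟩ ⟨j, s⟩
  simp only [evalM, Matrix.mul_apply, map_sum, _root_.map_mul, Matrix.sum_apply,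
    Fintype.sum_prod_type]

lemma evalM_star {a b : ℕ} (A : Matrix (Fin a) (Fin b) (FreePoly g)) :
    evalM X (starM A) = (evalM X A)ᵀ := by
  ext ⟨i, r⟩ ⟨j, s⟩
  simp [evalM, starM, evalP_pstar, Matrix.transpose_apply]

lemma evalM_add {a b : ℕ} (A B : Matrix (Fin a) (Fin b) (FreePoly g)) :
    evalM X (A + B) = evalM X A + evalM X B := by
  ext ⟨i, r⟩ ⟨j, s⟩
  simp [evalM, Matrix.add_apply]

lemma evalM_sum {a b : ℕ} {ι : Type*} (s : Finset ι)
    (f : ι → Matrix (Fin a) (Fin b) (FreePoly g)) :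
    evalM X (∑ i ∈ s, f i) = ∑ i ∈ s, evalM X (f i) := by
  classical
  induction s using Finset.induction with
  | empty => ext ⟨i, r⟩ ⟨j, t⟩; simp [evalM, Matrix.zero_apply]
  | @insert _ _ h ih => rw [Finset.sum_insert h, Finset.sum_insert h, evalM_add, ih]

lemma evalM_sqForm {ℓ : ℕ} (p : Fin ℓ → FreePoly g) :
    evalM X (sqForm p) = (evalRow X p)ᵀ * evalRow X p := by
  ext ⟨i, r⟩ ⟨j, s⟩
  simp [evalM, sqForm, evalRow, Matrix.mul_apply, evalP_pstar, Matrix.transpose_apply]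

lemma evalM_quadForm {ν ℓ : ℕ} (L : Matrix (Fin ν) (Fin ν) (FreePoly g))
    (q : Matrix (Fin ν) (Fin ℓ) (FreePoly g)) :
    evalM X (quadForm L q) = (evalM X q)ᵀ * evalM X L * evalM X q := by
  rw [quadForm, evalM_mul, evalM_mul, evalM_star]

lemma mulVec_block {a ℓ : ℕ} (m : Matrix (Fin a) (Fin ℓ) (FreePoly g))
    (v : Fin ℓ × Fin n → ℝ) (i : Fin a) (r : Fin n) :
    ((evalM X m).mulVec v) (i, r) = ((evalRow X (m i)).mulVec v) r := rfl

lemma main_key {ν ℓ : ℕ} (L : Matrix (Fin ν) (Fin ν) (FreePoly g))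
    (hX : (evalM X L).PosSemidef)
    (v : Fin ℓ × Fin n → ℝ) (J : Submodule (FreePoly g) (Fin ℓ → FreePoly g))
    (hJ : ∀ q : Fin ℓ → FreePoly g, q ∈ J ↔ (evalRow X q).mulVec v = 0)
    (a b : ℕ) (p : Fin a → (Fin ℓ → FreePoly g))
    (q : Fin b → Matrix (Fin ν) (Fin ℓ) (FreePoly g))
    (hmem : ((∑ i, sqForm (p i)) + ∑ j, quadForm L (q j)) ∈ modPlusStar J) :
    (∀ i, p i ∈ J) ∧ (∀ j, (evalM X L).mulVec ((evalM X (q j)).mulVec v) = 0)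
      ∧ ((evalM X L).PosDef → ∀ j, (evalM X (q j)).mulVec v = 0) := by
  classical
  obtain ⟨u, w, hu, hw, heq⟩ := hmem
  set y : Fin a → (Fin n → ℝ) := fun i => (evalRow X (p i)).mulVec v with hy
  set z : Fin b → (Fin ν × Fin n → ℝ) := fun j => (evalM X (q j)).mulVec v with hz
  -- the right-hand side evaluates to zero against v
  have hu0 : (evalM X u).mulVec v = 0 := by
    funext x
    obtain ⟨i, r⟩ := x
    rw [mulVec_block, (hJ (u i)).1 (hu i)]
    rfl
  have hw0 : (evalM X w).mulVec v = 0 := by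
    funext x
    obtain ⟨i, r⟩ := x
    rw [mulVec_block, (hJ (w i)).1 (hw i)]
    rfl
  have hRHS : v ⬝ᵥ (evalM X (u + starM w)).mulVec v = 0 := by
    rw [evalM_add, evalM_star, Matrix.add_mulVec, dotProduct_add, hu0,
      Matrix.dotProduct_mulVec, Matrix.vecMul_transpose, hw0]
    simp
  -- the left-hand side is a sum of nonnegative terms
  have hsq : ∀ i, v ⬝ᵥ (evalM X (sqForm (p i))).mulVec v = y i ⬝ᵥ y i := by
    intro i
    rw [evalM_sqForm, ← Matrix.mulVec_mulVec, Matrix.dotProduct_mulVec,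
      Matrix.vecMul_transpose]
  have hqd : ∀ j, v ⬝ᵥ (evalM X (quadForm L (q j))).mulVec v
      = z j ⬝ᵥ (evalM X L).mulVec (z j) := by
    intro j
    rw [evalM_quadForm, ← Matrix.mulVec_mulVec, ← Matrix.mulVec_mulVec,
      Matrix.dotProduct_mulVec, Matrix.vecMul_transpose]
  have hdots : ∀ (k : ℕ) (M : Fin k → Matrix (Fin ℓ × Fin n) (Fin ℓ × Fin n) ℝ),
      v ⬝ᵥ (∑ i, M i).mulVec v = ∑ i, v ⬝ᵥ (M i).mulVec v := by
    intro k M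
    induction (Finset.univ : Finset (Fin k)) using Finset.induction with
    | empty => simp
    | @insert _ _ h ih =>
        rw [Finset.sum_insert h, Finset.sum_insert h, Matrix.add_mulVec,
          dotProduct_add, ih]
  have hLHS : v ⬝ᵥ (evalM X ((∑ i, sqForm (p i)) + ∑ j, quadForm L (q j))).mulVec v
      = (∑ i, y i ⬝ᵥ y i) + ∑ j, z j ⬝ᵥ (evalM X L).mulVec (z j) := by
    rw [evalM_add, evalM_sum, evalM_sum, Matrix.add_mulVec, dotProduct_add,
      hdots a fun i => evalM X (sqForm (p i)), hdots b fun j => evalM X (quadForm L (q j))]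
    exact congrArg₂ (· + ·) (Finset.sum_congr rfl fun i _ => hsq i)
      (Finset.sum_congr rfl fun j _ => hqd j)
  have htotal : (∑ i, y i ⬝ᵥ y i) + ∑ j, z j ⬝ᵥ (evalM X L).mulVec (z j) = 0 := by
    rw [← hLHS, heq, hRHS]
  have hynn : ∀ i : Fin a, 0 ≤ y i ⬝ᵥ y i := fun i => Finset.sum_nonneg fun t _ =>
    mul_self_nonneg _
  have hznn : ∀ j : Fin b, 0 ≤ z j ⬝ᵥ (evalM X L).mulVec (z j) := by
    intro j
    have := hX.dotProduct_mulVec_nonneg (z j)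
    simpa using this
  have hsumy : (∑ i, y i ⬝ᵥ y i) = 0 := by
    have h1 : (0:ℝ) ≤ ∑ i, y i ⬝ᵥ y i := Finset.sum_nonneg fun i _ => hynn i
    have h2 : (0:ℝ) ≤ ∑ j, z j ⬝ᵥ (evalM X L).mulVec (z j) :=
      Finset.sum_nonneg fun j _ => hznn j
    linarith
  have hsumz : (∑ j, z j ⬝ᵥ (evalM X L).mulVec (z j)) = 0 := by
    have h1 : (0:ℝ) ≤ ∑ i, y i ⬝ᵥ y i := Finset.sum_nonneg fun i _ => hynn i
    linarith
  have hyi : ∀ i, y i ⬝ᵥ y i = 0 := by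
    intro i
    have := (Finset.sum_eq_zero_iff_of_nonneg (fun i _ => hynn i)).1 hsumy
    exact this i (Finset.mem_univ i)
  have hzj : ∀ j, z j ⬝ᵥ (evalM X L).mulVec (z j) = 0 := by
    intro j
    have := (Finset.sum_eq_zero_iff_of_nonneg (fun j _ => hznn j)).1 hsumz
    exact this j (Finset.mem_univ j)
  refine ⟨fun i => ?_, fun j => ?_, fun hPD j => ?_⟩
  · exact (hJ (p i)).2 (dotProduct_self_eq_zero.1 (hyi i))
  · have : star (z j) ⬝ᵥ (evalM X L).mulVec (z j) = 0 := by simpa using hzj j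
    exact (hX.dotProduct_mulVec_zero_iff (z j)).1 this
  · by_contra hne
    have := hPD.dotProduct_mulVec_pos hne
    rw [show star (z j) = z j from by simp] at this
    rw [hzj j] at this
    exact lt_irrefl 0 this

end Helpers

/-- **The vanishing left module of a single pair `(X,v)` with `L(X) ⪰ 0` is `L`-real;
if `L(X) ≻ 0` it is strongly `L`-real.** -/
theorem point_module_is_LReal (g ν ℓ n : ℕ) (hg : 0 < g)
    (L : Matrix (Fin ν) (Fin ν) (FreePoly g)) (hLsym : starM L = L)
    (X : Fin g → Matrix (Fin n) (Fin n) ℝ) (hX : (evalM X L).PosSemidef) :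
    (∀ (v : Fin ℓ × Fin n → ℝ) (J : Submodule (FreePoly g) (Fin ℓ → FreePoly g)),
      (∀ q : Fin ℓ → FreePoly g, q ∈ J ↔ (evalRow X q).mulVec v = 0) →
      IsLReal L J) ∧
    ((evalM X L).PosDef →
      ∀ (v : Fin ℓ × Fin n → ℝ) (J : Submodule (FreePoly g) (Fin ℓ → FreePoly g)),
        (∀ q : Fin ℓ → FreePoly g, q ∈ J ↔ (evalRow X q).mulVec v = 0) →
        IsLRealStrong L J) := by
  constructor
  · intro v J hJ a b p q hmem
    obtain ⟨h1, h2, _⟩ := main_key X L hX v J hJ a b p q hmem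
    refine ⟨h1, fun j i => ?_⟩
    have hz : (evalM X (L * q j)).mulVec v = 0 := by
      rw [evalM_mul, ← Matrix.mulVec_mulVec, h2 j]
    refine (hJ _).2 ?_
    funext r
    rw [← mulVec_block X (L * q j) v i r, hz]
    rfl
  · intro hPD v J hJ a b p q hmem
    obtain ⟨h1, _, h3⟩ := main_key X L hX v J hJ a b p q hmem
    refine ⟨h1, fun j i => ?_⟩
    refine (hJ _).2 ?_
    funext r
    rw [← mulVec_block X (q j) v i r, h3 hPD j]
    rfl
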